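/- Let λ, λ̂ be partitions of n and μ, μ̂ partitions of n−1 such that λ̂ is obtained from λ by moving a box from row i to row î with î > i, μ̂ from μ by the same move, and λ∖μ = λ̂∖μ̂ = (r,c). If r < i, then dim(μ̂)/dim(λ̂) ≥ dim(μ)/dim(λ); if r > î, then dim(μ̂)/dim(λ̂) ≤ dim(μ)/dim(λ). -/

import Mathlib

open scoped BigOperators

def isPartition (f : ℕ → ℕ) : Prop :=
  (∀ ⦃a b : ℕ⦄, a ≤ b → f b ≤ f a) ∧ ∃ N, ∀ a, N ≤ a → f a = 0

noncomputable def psize (f : ℕ → ℕ) : ℕ := ∑ᶠ a, f a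

def addBox (mu lam : ℕ → ℕ) : Prop := ∃ r, lam = Function.update mu r (mu r + 1)

noncomputable def dimY (lam : ℕ → ℕ) : ℕ :=
  Set.ncard { p : ℕ → ℕ → ℕ |
    p 0 = (fun _ => 0) ∧ (∀ k, isPartition (p k)) ∧
    (∀ k, k < psize lam → addBox (p k) (p (k + 1))) ∧
    (∀ k, psize lam ≤ k → p k = lam) }

def pathSet (lam : ℕ → ℕ) : Set (ℕ → ℕ → ℕ) :=
  { p : ℕ → ℕ → ℕ |
    p 0 = (fun _ => 0) ∧ (∀ k, isPartition (p k)) ∧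
    (∀ k, k < psize lam → addBox (p k) (p (k + 1))) ∧
    (∀ k, psize lam ≤ k → p k = lam) }

lemma dimY_eq_ncard (lam : ℕ → ℕ) : dimY lam = (pathSet lam).ncard := rfl

lemma psize_eq_sum (f : ℕ → ℕ) {N : ℕ} (h : ∀ a, N ≤ a → f a = 0) :
    psize f = ∑ a ∈ Finset.range N, f a := by
  apply finsum_eq_sum_of_support_subset
  intro a ha
  simp only [Function.mem_support] at ha
  simp only [Finset.coe_range, Set.mem_Iio]
  by_contra hc
  exact ha (h a (by omega))

lemma psize_update_succ (f : ℕ → ℕ) (r : ℕ) {N : ℕ} (h : ∀ a, N ≤ a → f a = 0) :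
    psize (Function.update f r (f r + 1)) = psize f + 1 := by
  have h1 : ∀ a, N + r + 1 ≤ a → f a = 0 := fun a ha => h a (by omega)
  have h2 : ∀ a, N + r + 1 ≤ a → Function.update f r (f r + 1) a = 0 := by
    intro a ha
    rw [Function.update_of_ne (by omega : a ≠ r)]
    exact h1 a ha
  have hrmem : r ∈ Finset.range (N + r + 1) := Finset.mem_range.mpr (by omega)
  rw [psize_eq_sum _ h1, psize_eq_sum _ h2]
  rw [Finset.sum_update_of_mem hrmem]
  rw [← Finset.add_sum_erase _ f hrmem, Finset.erase_eq]
  ring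

lemma psize_zero_eq (f : ℕ → ℕ) (hf : isPartition f) (h : psize f = 0) : f = fun _ => 0 := by
  obtain ⟨N, hN⟩ := hf.2
  rw [psize_eq_sum f hN] at h
  funext a
  rcases lt_or_ge a N with hc | hc
  · exact (Finset.sum_eq_zero_iff.mp h) a (Finset.mem_range.mpr hc)
  · exact hN a hc

lemma psize_zero_fn : psize (fun _ => 0) = 0 := by
  simp [psize]

lemma path_psize {lam : ℕ → ℕ} {p : ℕ → ℕ → ℕ} (hp : p ∈ pathSet lam) :
    ∀ k, k ≤ psize lam → psize (p k) = k := by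
  intro k
  induction k with
  | zero => intro _; rw [hp.1]; exact psize_zero_fn
  | succ k ih =>
    intro hk
    obtain ⟨r, hr⟩ := hp.2.2.1 k (by omega)
    obtain ⟨N, hN⟩ := (hp.2.1 k).2
    rw [hr, psize_update_succ _ r hN, ih (by omega)]

lemma dimY_of_psize_zero (lam : ℕ → ℕ) (hlam : isPartition lam) (h : psize lam = 0) :
    dimY lam = 1 := by
  have hz : lam = fun _ => 0 := psize_zero_eq lam hlam h
  have : pathSet lam = {fun _ => lam} := by
    apply Set.eq_singleton_iff_unique_mem.mpr
    constructor
    · exact ⟨by rw [hz], fun k => hlam, fun k hk => absurd hk (by omega), fun k _ => rfl⟩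
    · intro p hp
      funext k
      exact hp.2.2.2 k (by omega)
  rw [dimY_eq_ncard, this, Set.ncard_singleton]

lemma rm_partition {lam : ℕ → ℕ} (hlam : isPartition lam) {r : ℕ} (hv : lam (r+1) < lam r) :
    isPartition (Function.update lam r (lam r - 1)) := by
  constructor
  · intro a b hab
    have h0 := hlam.1 hab
    rw [Function.update_apply, Function.update_apply]
    split <;> split
    · omega
    · rename_i hbr har
      have : a ≤ r := by omega
      have := hlam.1 this
      omega
    · rename_i hbr har
      have : r + 1 ≤ b := by omega
      have := hlam.1 this
      omega
    · omega
  · obtain ⟨N, hN⟩ := hlam.2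
    refine ⟨N + r + 1, fun a ha => ?_⟩
    rw [Function.update_of_ne (by omega : a ≠ r)]
    exact hN a (by omega)

lemma update_rm_eq {lam : ℕ → ℕ} {r : ℕ} (hr : 1 ≤ lam r) :
    Function.update (Function.update lam r (lam r - 1)) r
      ((Function.update lam r (lam r - 1)) r + 1) = lam := by
  rw [Function.update_self, Function.update_idem]
  rw [show lam r - 1 + 1 = lam r from by omega]
  exact Function.update_eq_self r lam

lemma psize_rm {lam : ℕ → ℕ} (hlam : isPartition lam) {r : ℕ} (hr : 1 ≤ lam r) :
    psize (Function.update lam r (lam r - 1)) + 1 = psize lam := by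
  obtain ⟨N, hN⟩ := hlam.2
  have hN' : ∀ a, N + r + 1 ≤ a → Function.update lam r (lam r - 1) a = 0 := by
    intro a ha
    rw [Function.update_of_ne (by omega : a ≠ r)]
    exact hN a (by omega)
  conv_rhs => rw [← update_rm_eq hr]
  rw [psize_update_succ _ r hN']

def extendP (lam : ℕ → ℕ) (n : ℕ) (q : ℕ → ℕ → ℕ) : ℕ → ℕ → ℕ :=
  fun k => if k ≤ n then q k else lam

def truncP (n : ℕ) (p : ℕ → ℕ → ℕ) : ℕ → ℕ → ℕ :=
  fun k => if k ≤ n then p k else p n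

lemma extend_mem {lam : ℕ → ℕ} {n r : ℕ} (hlam : isPartition lam) (hn : psize lam = n + 1)
    (hv : lam (r+1) < lam r) {q : ℕ → ℕ → ℕ}
    (hq : q ∈ pathSet (Function.update lam r (lam r - 1))) :
    extendP lam n q ∈ pathSet lam ∧ truncP n (extendP lam n q) = q := by
  set mu := Function.update lam r (lam r - 1) with hmu
  have hsmu : psize mu = n := by
    have h := psize_rm hlam (by omega : 1 ≤ lam r)
    rw [← hmu] at h
    omega
  have hqfin : ∀ k, n ≤ k → q k = mu := fun k hk => hq.2.2.2 k (by omega)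
  have hmem : extendP lam n q ∈ pathSet lam := by
    refine ⟨?_, ?_, ?_, ?_⟩
    · show (if 0 ≤ n then q 0 else lam) = _
      rw [if_pos (by omega)]; exact hq.1
    · intro k
      show isPartition (if k ≤ n then q k else lam)
      split
      · exact hq.2.1 k
      · exact hlam
    · intro k hk
      rw [hn] at hk
      show addBox (if k ≤ n then q k else lam) (if k + 1 ≤ n then q (k+1) else lam)
      rcases eq_or_lt_of_le (show k + 1 ≤ n + 1 by omega) with heq | hlt
      · rw [if_pos (show k ≤ n by omega), if_neg (by omega)]
        rw [hqfin k (by omega)]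
        exact ⟨r, (update_rm_eq (by omega : 1 ≤ lam r)).symm⟩
      · rw [if_pos (show k ≤ n by omega), if_pos (by omega)]
        exact hq.2.2.1 k (by omega)
    · intro k hk
      rw [hn] at hk
      show (if k ≤ n then q k else lam) = lam
      rw [if_neg (by omega)]
  refine ⟨hmem, ?_⟩
  funext k
  show (if k ≤ n then extendP lam n q k else extendP lam n q n) = q k
  rcases le_or_gt k n with h | h
  · rw [if_pos h]
    show (if k ≤ n then q k else lam) = q k
    rw [if_pos h]
  · rw [if_neg (by omega)]
    show (if n ≤ n then q n else lam) = q k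
    rw [if_pos le_rfl, hqfin n le_rfl, hqfin k (by omega)]

lemma path_decomp {lam : ℕ → ℕ} {n : ℕ} (hlam : isPartition lam) (hn : psize lam = n + 1)
    {p : ℕ → ℕ → ℕ} (hp : p ∈ pathSet lam) :
    ∃ r, lam (r+1) < lam r ∧ p n = Function.update lam r (lam r - 1) ∧
      truncP n p ∈ pathSet (Function.update lam r (lam r - 1)) ∧
      extendP lam n (truncP n p) = p := by
  obtain ⟨r, hr⟩ := hp.2.2.1 n (by omega)
  have hpn1 : p (n+1) = lam := hp.2.2.2 (n+1) (by omega)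
  rw [hpn1] at hr
  have hlamr : lam r = p n r + 1 := by rw [hr, Function.update_self]
  have hpn : p n = Function.update lam r (lam r - 1) := by
    funext a
    rcases eq_or_ne a r with rfl | ha
    · rw [Function.update_self]; omega
    · rw [Function.update_of_ne ha, hr, Function.update_of_ne ha]
  have hv : lam (r+1) < lam r := by
    have h1 : p n (r+1) ≤ p n r := (hp.2.1 n).1 (by omega : r ≤ r + 1)
    have h2 : lam (r+1) = p n (r+1) := by
      rw [hr, Function.update_of_ne (by omega : r + 1 ≠ r)]
    omega
  set mu := Function.update lam r (lam r - 1) with hmu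
  have hsmu : psize mu = n := by
    have h := psize_rm hlam (by omega : 1 ≤ lam r)
    rw [← hmu] at h
    omega
  refine ⟨r, hv, hpn, ⟨?_, ?_, ?_, ?_⟩, ?_⟩
  · show (if 0 ≤ n then p 0 else p n) = _
    rw [if_pos (by omega)]; exact hp.1
  · intro k
    show isPartition (if k ≤ n then p k else p n)
    split <;> exact hp.2.1 _
  · intro k hk
    rw [hsmu] at hk
    show addBox (if k ≤ n then p k else p n) (if k + 1 ≤ n then p (k+1) else p n)
    rw [if_pos (show k ≤ n by omega), if_pos (show k + 1 ≤ n by omega)]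
    exact hp.2.2.1 k (by omega)
  · intro k hk
    rw [hsmu] at hk
    show (if k ≤ n then p k else p n) = mu
    rcases eq_or_lt_of_le hk with heq | hlt
    · rw [if_pos (by omega), ← heq, hpn]
    · rw [if_neg (by omega), hpn]
  · funext k
    show (if k ≤ n then truncP n p k else lam) = p k
    rcases le_or_gt k n with h | h
    · rw [if_pos h]
      show (if k ≤ n then p k else p n) = p k
      rw [if_pos h]
    · rw [if_neg (by omega)]
      exact (hp.2.2.2 k (by omega)).symm

lemma ncard_biUnion {α : Type*} (s : Finset ℕ) (f : ℕ → Set α)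
    (hfin : ∀ i ∈ s, (f i).Finite)
    (hdisj : ∀ i ∈ s, ∀ j ∈ s, i ≠ j → Disjoint (f i) (f j)) :
    (⋃ i ∈ s, f i).ncard = ∑ i ∈ s, (f i).ncard := by
  classical
  induction s using Finset.induction with
  | empty => simp
  | @insert a s ha ih =>
    rw [Finset.set_biUnion_insert, Finset.sum_insert ha]
    have hd : Disjoint (f a) (⋃ i ∈ s, f i) := by
      rw [Set.disjoint_left]
      intro x hx hx'
      obtain ⟨i, hi, hxi⟩ := Set.mem_iUnion₂.mp hx'
      have : a ≠ i := fun h => ha (h ▸ hi)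
      exact (Set.disjoint_left.mp (hdisj a (Finset.mem_insert_self _ _) i
        (Finset.mem_insert_of_mem hi) this)) hx hxi
    rw [Set.ncard_union_eq hd (hfin a (Finset.mem_insert_self _ _))
      (Set.Finite.biUnion (Finset.finite_toSet s) (fun i hi => hfin i (Finset.mem_insert_of_mem hi)))]
    rw [ih (fun i hi => hfin i (Finset.mem_insert_of_mem hi))
      (fun i hi j hj hij => hdisj i (Finset.mem_insert_of_mem hi) j (Finset.mem_insert_of_mem hj) hij)]

lemma pathSet_finite : ∀ n (lam : ℕ → ℕ), isPartition lam → psize lam = n → (pathSet lam).Finite := by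
  intro n
  induction n with
  | zero =>
    intro lam hlam h
    apply Set.Finite.subset (Set.finite_singleton (fun _ => lam))
    intro p hp
    have : p = fun _ => lam := funext fun k => hp.2.2.2 k (by omega)
    simp [this]
  | succ n ih =>
    intro lam hlam h
    obtain ⟨N, hN⟩ := hlam.2
    apply Set.Finite.subset (s := ⋃ r ∈ (Finset.range N).filter (fun r => lam (r+1) < lam r),
      extendP lam n '' pathSet (Function.update lam r (lam r - 1)))
    · apply Set.Finite.biUnion (Finset.finite_toSet _)
      intro r hr
      simp only [Finset.coe_filter, Set.mem_setOf_eq, Finset.mem_range] at hr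
      have hpart := rm_partition hlam hr.2
      have hsize : psize (Function.update lam r (lam r - 1)) = n := by
        have := psize_rm hlam (by omega : 1 ≤ lam r)
        omega
      exact Set.Finite.image _ (ih _ hpart hsize)
    · intro p hp
      obtain ⟨r, hv, hpn, htr, hex⟩ := path_decomp hlam h hp
      have hrN : r < N := by
        by_contra hc
        have := hN r (by omega)
        omega
      exact Set.mem_iUnion₂.mpr ⟨r, Finset.mem_filter.mpr ⟨Finset.mem_range.mpr hrN, hv⟩,
        truncP n p, htr, hex⟩

lemma dimY_branch {n m : ℕ} {lam : ℕ → ℕ} (hlam : isPartition lam) (hn : psize lam = n + 1)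
    (hm : ∀ s, m ≤ s → lam s = 0) :
    dimY lam = ∑ r ∈ Finset.range m,
      if lam (r+1) < lam r then dimY (Function.update lam r (lam r - 1)) else 0 := by
  classical
  set V := (Finset.range m).filter (fun r => lam (r+1) < lam r) with hV
  have hmuprop : ∀ r ∈ V, isPartition (Function.update lam r (lam r - 1)) ∧
      psize (Function.update lam r (lam r - 1)) = n := by
    intro r hr
    rw [hV, Finset.mem_filter] at hr
    refine ⟨rm_partition hlam hr.2, ?_⟩
    have := psize_rm hlam (by omega : 1 ≤ lam r)
    omega
  have key : pathSet lam = ⋃ r ∈ V, extendP lam n '' pathSet (Function.update lam r (lam r - 1)) := by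
    ext p
    constructor
    · intro hp
      obtain ⟨r, hv, hpn, htr, hex⟩ := path_decomp hlam hn hp
      have hrm : r < m := by
        by_contra hc
        have := hm r (by omega)
        omega
      exact Set.mem_iUnion₂.mpr ⟨r, Finset.mem_filter.mpr ⟨Finset.mem_range.mpr hrm, hv⟩,
        truncP n p, htr, hex⟩
    · intro hp
      rw [Set.mem_iUnion₂] at hp
      obtain ⟨r, hr, hq⟩ := hp
      obtain ⟨q, hq, rfl⟩ := hq
      have hv : lam (r+1) < lam r := (Finset.mem_filter.mp hr).2
      exact (extend_mem hlam hn hv hq).1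
  have hfin : ∀ r ∈ V, (extendP lam n '' pathSet (Function.update lam r (lam r - 1))).Finite := by
    intro r hr
    exact Set.Finite.image _ (pathSet_finite n _ (hmuprop r hr).1 (hmuprop r hr).2)
  have himgn : ∀ r ∈ V, ∀ p ∈ extendP lam n '' pathSet (Function.update lam r (lam r - 1)),
      p n = Function.update lam r (lam r - 1) := by
    intro r hr p hp
    obtain ⟨q, hq, rfl⟩ := hp
    have hqn : q n = Function.update lam r (lam r - 1) := hq.2.2.2 n (le_of_eq (hmuprop r hr).2)
    show (if n ≤ n then q n else lam) = _
    rw [if_pos le_rfl, hqn]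
  have hdisj : ∀ r ∈ V, ∀ r' ∈ V, r ≠ r' →
      Disjoint (extendP lam n '' pathSet (Function.update lam r (lam r - 1)))
        (extendP lam n '' pathSet (Function.update lam r' (lam r' - 1))) := by
    intro r hr r' hr' hne
    rw [Set.disjoint_left]
    intro p hp hp'
    have h1 := himgn r hr p hp
    have h2 := himgn r' hr' p hp'
    have hvr : lam (r+1) < lam r := (Finset.mem_filter.mp hr).2
    have : Function.update lam r (lam r - 1) r = Function.update lam r' (lam r' - 1) r := by
      rw [← h1, ← h2]
    rw [Function.update_self, Function.update_of_ne hne] at this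
    omega
  rw [dimY_eq_ncard, key, ncard_biUnion V _ hfin hdisj, hV, Finset.sum_filter]
  apply Finset.sum_congr rfl
  intro r hr
  split
  · rename_i hv
    have hrV : r ∈ V := Finset.mem_filter.mpr ⟨hr, hv⟩
    have hinj : Set.InjOn (extendP lam n) (pathSet (Function.update lam r (lam r - 1))) := by
      intro q hq q' hq' heq
      have e1 := (extend_mem hlam hn hv hq).2
      have e2 := (extend_mem hlam hn hv hq').2
      rw [← e1, ← e2, heq]
    rw [Set.ncard_image_of_injOn hinj, dimY_eq_ncard]
  · rfl

open Polynomial Finset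

lemma coeff_basis_top (s : Finset ℕ) (v : ℕ → ℚ) (i : ℕ) (hi : i ∈ s) :
    (Lagrange.basis s v i).coeff (s.card - 1) = ∏ t ∈ s.erase i, (v i - v t)⁻¹ := by
  have hcard : (s.erase i).card = s.card - 1 := by
    rw [Finset.card_erase_of_mem hi]
  unfold Lagrange.basis Lagrange.basisDivisor
  rw [Finset.prod_mul_distrib, ← map_prod]
  rw [Polynomial.coeff_C_mul]
  have : ∀ t ∈ s.erase i, (X - C (v t) : ℚ[X]) = X + C (- v t) := by
    intro t _; rw [map_neg, sub_eq_add_neg]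
  rw [Finset.prod_congr rfl this, Finset.prod_X_add_C_coeff _ _ (by omega : s.card - 1 ≤ (s.erase i).card)]
  rw [hcard, Nat.sub_self, Finset.powersetCard_zero]
  simp

lemma coeff_of_interp (s : Finset ℕ) (v : ℕ → ℚ) (hv : Set.InjOn v s) (Q : ℚ[X])
    (hQ : Q.degree < s.card) :
    Q.coeff (s.card - 1) = ∑ r ∈ s, Q.eval (v r) * ∏ t ∈ s.erase r, (v r - v t)⁻¹ := by
  conv_lhs => rw [Lagrange.eq_interpolate hv hQ]
  rw [Lagrange.interpolate_apply, Polynomial.finset_sum_coeff]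
  exact Finset.sum_congr rfl fun r hr => by rw [Polynomial.coeff_C_mul, coeff_basis_top _ _ _ hr]

lemma card_pairs_mem (s : Finset ℕ) (i : ℕ) (hi : i ∈ s) :
    ((s.powersetCard 2).filter (fun t => i ∈ t)).card = s.card - 1 := by
  have : ((s.powersetCard 2).filter (fun t => i ∈ t)).card = ((s.erase i).powersetCard 1).card := by
    apply Finset.card_bij' (fun t _ => t.erase i) (fun u _ => insert i u)
    case hi =>
      intro t ht
      simp only [Finset.mem_filter, Finset.mem_powersetCard] at ht
      rw [Finset.mem_powersetCard]
      constructor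
      · intro x hx
        rw [Finset.mem_erase] at hx ⊢
        exact ⟨hx.1, ht.1.1 hx.2⟩
      · rw [Finset.card_erase_of_mem ht.2, ht.1.2]
    case hj =>
      intro u hu
      rw [Finset.mem_powersetCard] at hu
      have hiu : i ∉ u := fun h => (Finset.mem_erase.mp (hu.1 h)).1 rfl
      simp only [Finset.mem_filter, Finset.mem_powersetCard]
      refine ⟨⟨?_, ?_⟩, Finset.mem_insert_self _ _⟩
      · intro x hx
        rcases Finset.mem_insert.mp hx with rfl | hx
        · exact hi
        · exact (Finset.mem_erase.mp (hu.1 hx)).2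
      · rw [Finset.card_insert_of_notMem hiu, hu.2]
    case left_inv =>
      intro t ht
      simp only [Finset.mem_filter] at ht
      exact Finset.insert_erase ht.2
    case right_inv =>
      intro u hu
      rw [Finset.mem_powersetCard] at hu
      have hiu : i ∉ u := fun h => (Finset.mem_erase.mp (hu.1 h)).1 rfl
      exact Finset.erase_insert hiu
  rw [this, Finset.card_powersetCard, Finset.card_erase_of_mem hi, Nat.choose_one_right]

lemma sum_pairs (s : Finset ℕ) (v : ℕ → ℚ) :
    ∑ t ∈ s.powersetCard 2, ∑ i ∈ t, v i = ((s.card - 1 : ℕ) : ℚ) * ∑ i ∈ s, v i := by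
  have h1 : ∀ t ∈ s.powersetCard 2, ∑ i ∈ t, v i = ∑ i ∈ s, if i ∈ t then v i else 0 := by
    intro t ht
    rw [Finset.sum_ite_mem, Finset.inter_eq_right.mpr (Finset.mem_powersetCard.mp ht).1]
  rw [Finset.sum_congr rfl h1, Finset.sum_comm]
  rw [Finset.mul_sum]
  apply Finset.sum_congr rfl
  intro i hi
  rw [← Finset.sum_filter, Finset.sum_const, card_pairs_mem s i hi]
  simp [mul_comm]

lemma key_identity (s : Finset ℕ) (v : ℕ → ℚ) (hv : Set.InjOn v s) :
    ∑ r ∈ s, v r * ∏ t ∈ s.erase r, ((v r - v t - 1) / (v r - v t))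
      = (∑ t ∈ s, v t) - (s.card.choose 2 : ℚ) := by
  rcases Nat.lt_or_ge s.card 2 with hc | hc
  · interval_cases h : s.card
    · rw [Finset.card_eq_zero.mp h]; simp
    · obtain ⟨a, rfl⟩ := Finset.card_eq_one.mp h
      simp
  · obtain ⟨M, hM⟩ : ∃ M, s.card = M + 2 := ⟨s.card - 2, by omega⟩
    set g : Polynomial ℚ := ∏ t ∈ s, (Polynomial.X + Polynomial.C (- v t)) with hg
    set g1 : Polynomial ℚ := ∏ t ∈ s, (Polynomial.X + Polynomial.C (- (v t + 1))) with hg1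
    set p : Polynomial ℚ := g1 - g with hp
    set Q : Polynomial ℚ := -(Polynomial.X * p) - Polynomial.C ((M + 2 : ℕ) : ℚ) * g with hQdef
    -- coefficient computations
    have hgtop : g.coeff (M + 2) = 1 := by
      rw [hg, Finset.prod_X_add_C_coeff _ _ (le_of_eq hM.symm)]
      rw [hM, Nat.sub_self, Finset.powersetCard_zero]
      simp
    have hg1top : g1.coeff (M + 2) = 1 := by
      rw [hg1, Finset.prod_X_add_C_coeff _ _ (le_of_eq hM.symm)]
      rw [hM, Nat.sub_self, Finset.powersetCard_zero]
      simp
    have hgnext : g.coeff (M + 1) = - ∑ t ∈ s, v t := by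
      rw [hg, Finset.prod_X_add_C_coeff _ _ (by omega : M + 1 ≤ s.card)]
      rw [hM, show M + 2 - (M + 1) = 1 by omega, Finset.powersetCard_one]
      rw [Finset.sum_map]
      simp [Finset.sum_neg_distrib]
    have hg1next : g1.coeff (M + 1) = - (∑ t ∈ s, v t) - (M + 2 : ℚ) := by
      rw [hg1, Finset.prod_X_add_C_coeff _ _ (by omega : M + 1 ≤ s.card)]
      rw [hM, show M + 2 - (M + 1) = 1 by omega, Finset.powersetCard_one]
      rw [Finset.sum_map]
      simp only [Function.Embedding.coeFn_mk, Finset.prod_singleton]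
      rw [Finset.sum_congr rfl (fun t _ => by ring_nf : ∀ t ∈ s, -(v t + 1) = -v t + (-1 : ℚ))]
      rw [Finset.sum_add_distrib, Finset.sum_const, hM]
      push_cast
      rw [Finset.sum_neg_distrib]
      ring
    have hgdeg : ∀ k, M + 2 < k → g.coeff k = 0 := by
      intro k hk
      apply Polynomial.coeff_eq_zero_of_natDegree_lt
      calc g.natDegree ≤ ∑ t ∈ s, (Polynomial.X + Polynomial.C (- v t)).natDegree :=
            Polynomial.natDegree_prod_le _ _
        _ ≤ M + 2 := by
            simp only [Polynomial.natDegree_X_add_C, Finset.sum_const, smul_eq_mul, mul_one, hM,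
              le_refl]
        _ < k := hk
    have hg1deg : ∀ k, M + 2 < k → g1.coeff k = 0 := by
      intro k hk
      apply Polynomial.coeff_eq_zero_of_natDegree_lt
      calc g1.natDegree ≤ ∑ t ∈ s, (Polynomial.X + Polynomial.C (- (v t + 1))).natDegree :=
            Polynomial.natDegree_prod_le _ _
        _ ≤ M + 2 := by
            simp only [Polynomial.natDegree_X_add_C, Finset.sum_const, smul_eq_mul, mul_one, hM,
              le_refl]
        _ < k := hk
    have hpnext : p.coeff (M + 1) = - (M + 2 : ℚ) := by
      rw [hp, Polynomial.coeff_sub, hgnext, hg1next]; ring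
    have hQdeg : Q.degree < (s.card : ℕ) := by
      rw [hM, Polynomial.degree_lt_iff_coeff_zero]
      intro k hk
      obtain ⟨j, rfl⟩ : ∃ j, k = j + 1 := ⟨k - 1, by omega⟩
      rw [hQdef, Polynomial.coeff_sub, Polynomial.coeff_neg, Polynomial.coeff_X_mul,
        Polynomial.coeff_C_mul]
      rcases eq_or_lt_of_le hk with heq | hlt
      · have hj : j = M + 1 := by omega
        subst hj
        rw [hpnext, ← heq, hgtop]
        push_cast; ring
      · have h1 : p.coeff j = 0 := by
          rcases eq_or_lt_of_le (show M + 2 ≤ j by omega) with hj | hj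
          · rw [hp, Polynomial.coeff_sub, ← hj, hg1top, hgtop]; ring
          · rw [hp, Polynomial.coeff_sub, hg1deg j hj, hgdeg j hj]; ring
        rw [h1, hgdeg (j+1) (by omega)]
        ring
    -- value of Q at nodes
    have hQeval : ∀ r ∈ s, Q.eval (v r) = v r * ∏ t ∈ s.erase r, (v r - v t - 1) := by
      intro r hr
      have hgz : g.eval (v r) = 0 := by
        rw [hg, Polynomial.eval_prod]
        exact Finset.prod_eq_zero hr (by simp)
      have hg1v : g1.eval (v r) = - ∏ t ∈ s.erase r, (v r - v t - 1) := by
        rw [hg1, Polynomial.eval_prod]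
        rw [← Finset.mul_prod_erase s _ hr]
        simp only [Polynomial.eval_add, Polynomial.eval_X, Polynomial.eval_C]
        rw [show v r + -(v r + 1) = -1 by ring]
        rw [neg_one_mul, neg_inj]
        exact Finset.prod_congr rfl fun t _ => by ring
      rw [hQdef]
      simp only [Polynomial.eval_sub, Polynomial.eval_neg, Polynomial.eval_mul, Polynomial.eval_X,
        Polynomial.eval_C, hgz, hp, Polynomial.eval_sub, hg1v]
      ring
    -- the top coefficient of Q
    have hpM : p.coeff M = ((M + 1 : ℕ) : ℚ) * (∑ t ∈ s, v t) + ((M+2).choose 2 : ℚ) := by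
      rw [hp, Polynomial.coeff_sub, hg, hg1,
        Finset.prod_X_add_C_coeff _ _ (by omega : M ≤ s.card),
        Finset.prod_X_add_C_coeff _ _ (by omega : M ≤ s.card)]
      rw [hM, show M + 2 - M = 2 by omega, ← Finset.sum_sub_distrib]
      have hterm : ∀ t ∈ s.powersetCard 2,
          (∏ i ∈ t, -(v i + 1)) - (∏ i ∈ t, -(v i)) = (∑ i ∈ t, v i) + 1 := by
        intro t ht
        have hcard2 : t.card = 2 := (Finset.mem_powersetCard.mp ht).2
        obtain ⟨x, y, hxy, rfl⟩ := Finset.card_eq_two.mp hcard2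
        rw [Finset.prod_pair hxy, Finset.prod_pair hxy, Finset.sum_pair hxy]
        ring
      rw [Finset.sum_congr rfl hterm, Finset.sum_add_distrib, Finset.sum_const,
        Finset.card_powersetCard, hM, sum_pairs, hM]
      rw [show M + 2 - 1 = M + 1 by omega]
      push_cast
      ring
    have hQtop : Q.coeff (M + 1) = (∑ t ∈ s, v t) - ((M+2).choose 2 : ℚ) := by
      rw [hQdef, Polynomial.coeff_sub, Polynomial.coeff_neg, Polynomial.coeff_X_mul,
        Polynomial.coeff_C_mul, hpM, hgnext]
      push_cast
      ring
    -- assemble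
    have hinterp := coeff_of_interp s v hv Q hQdeg
    rw [hM, show M + 2 - 1 = M + 1 by omega] at hinterp
    have hsum : ∀ r ∈ s, v r * ∏ t ∈ s.erase r, ((v r - v t - 1) / (v r - v t))
        = Q.eval (v r) * ∏ t ∈ s.erase r, (v r - v t)⁻¹ := by
      intro r hr
      rw [hQeval r hr]
      rw [Finset.prod_congr rfl (fun t _ => div_eq_mul_inv _ _), Finset.prod_mul_distrib]
      ring
    rw [Finset.sum_congr rfl hsum, ← hinterp, hQtop, hM]

noncomputable def Vdm (m : ℕ) (v : ℕ → ℚ) : ℚ :=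
  ∏ t ∈ Finset.range m, ∏ s ∈ Finset.range t, (v s - v t)

noncomputable def VdmAux (m r : ℕ) (v : ℕ → ℚ) : ℚ :=
  ∏ t ∈ Finset.range m, ∏ s ∈ Finset.range t, (if s = r ∨ t = r then 1 else v s - v t)

lemma Vdm_update (m r : ℕ) (hr : r < m) (v : ℕ → ℚ) (c : ℚ) :
    Vdm m (Function.update v r c)
      = ((∏ s ∈ Finset.range r, (v s - c)) * ∏ t ∈ Finset.Ico (r+1) m, (c - v t))
        * VdmAux m r v := by
  have step1 : Vdm m (Function.update v r c)
      = (∏ t ∈ Finset.range m, ∏ s ∈ Finset.range t,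
          (if s = r ∨ t = r then Function.update v r c s - Function.update v r c t else 1))
        * VdmAux m r v := by
    rw [VdmAux, ← Finset.prod_mul_distrib]
    apply Finset.prod_congr rfl
    intro t _
    rw [← Finset.prod_mul_distrib]
    apply Finset.prod_congr rfl
    intro s _
    by_cases h : s = r ∨ t = r
    · rw [if_pos h, if_pos h, mul_one]
    · push_neg at h
      rw [if_neg (by tauto), if_neg (by tauto), one_mul,
        Function.update_of_ne h.1, Function.update_of_ne h.2]
  rw [step1]
  congr 1
  -- compute the first factor
  have hsplit : Finset.range m = Finset.Ico 0 r ∪ Finset.Ico r m := by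
    rw [Finset.range_eq_Ico, ← Finset.Ico_union_Ico_eq_Ico (by omega : (0:ℕ) ≤ r) (by omega : r ≤ m)]
  simp only [Finset.range_eq_Ico]
  rw [← Finset.prod_Ico_consecutive _ (by omega : (0:ℕ) ≤ r) (by omega : r ≤ m)]
  rw [Finset.prod_eq_prod_Ico_succ_bot hr]
  have h1 : ∀ t ∈ Finset.Ico 0 r, (∏ s ∈ Finset.Ico 0 t,
      (if s = r ∨ t = r then Function.update v r c s - Function.update v r c t else 1)) = 1 := by
    intro t ht
    rw [Finset.mem_Ico] at ht
    apply Finset.prod_eq_one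
    intro s hs
    rw [Finset.mem_Ico] at hs
    rw [if_neg (by omega)]
  have h2 : (∏ s ∈ Finset.Ico 0 r,
      (if s = r ∨ r = r then Function.update v r c s - Function.update v r c r else 1))
      = ∏ s ∈ Finset.Ico 0 r, (v s - c) := by
    apply Finset.prod_congr rfl
    intro s hs
    rw [Finset.mem_Ico] at hs
    rw [if_pos (Or.inr rfl), Function.update_of_ne (by omega), Function.update_self]
  have h3 : ∀ t ∈ Finset.Ico (r+1) m, (∏ s ∈ Finset.Ico 0 t,
      (if s = r ∨ t = r then Function.update v r c s - Function.update v r c t else 1))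
      = c - v t := by
    intro t ht
    rw [Finset.mem_Ico] at ht
    have : ∀ s ∈ Finset.Ico 0 t,
        (if s = r ∨ t = r then Function.update v r c s - Function.update v r c t else 1)
        = (if s = r then Function.update v r c s - Function.update v r c t else 1) := by
      intro s _
      by_cases h : s = r
      · rw [if_pos (Or.inl h), if_pos h]
      · rw [if_neg (by omega), if_neg h]
    rw [Finset.prod_congr rfl this, Finset.prod_ite_eq' (Finset.Ico 0 t) r
      (fun s => Function.update v r c s - Function.update v r c t)]
    rw [if_pos (Finset.mem_Ico.mpr (by omega)), Function.update_self,
      Function.update_of_ne (by omega)]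
  rw [Finset.prod_congr rfl h1, Finset.prod_congr rfl h3, h2]
  simp

lemma vand_move (m r : ℕ) (hr : r < m) (v : ℕ → ℚ) :
    Vdm m (Function.update v r (v r - 1)) * ∏ s ∈ (Finset.range m).erase r, (v r - v s)
      = Vdm m v * ∏ s ∈ (Finset.range m).erase r, (v r - v s - 1) := by
  have hv : Vdm m v = Vdm m (Function.update v r (v r)) := by rw [Function.update_eq_self]
  rw [hv, Vdm_update m r hr v (v r), Vdm_update m r hr v (v r - 1)]
  have herase : (Finset.range m).erase r = Finset.range r ∪ Finset.Ico (r+1) m := by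
    ext a
    simp only [Finset.mem_erase, Finset.mem_range, Finset.mem_union, Finset.mem_Ico]
    omega
  have hdisj : Disjoint (Finset.range r) (Finset.Ico (r+1) m) := by
    rw [Finset.disjoint_left]
    intro a ha ha'
    rw [Finset.mem_range] at ha
    rw [Finset.mem_Ico] at ha'
    omega
  rw [herase, Finset.prod_union hdisj, Finset.prod_union hdisj]
  have e1 : (∏ s ∈ Finset.range r, (v s - (v r - 1))) * (∏ s ∈ Finset.range r, (v r - v s))
      = (∏ s ∈ Finset.range r, (v s - v r)) * (∏ s ∈ Finset.range r, (v r - v s - 1)) := by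
    rw [← Finset.prod_mul_distrib, ← Finset.prod_mul_distrib]
    exact Finset.prod_congr rfl fun s _ => by ring
  have e2 : (∏ t ∈ Finset.Ico (r+1) m, ((v r - 1) - v t)) * (∏ s ∈ Finset.Ico (r+1) m, (v r - v s))
      = (∏ t ∈ Finset.Ico (r+1) m, (v r - v t)) * (∏ s ∈ Finset.Ico (r+1) m, (v r - v s - 1)) := by
    rw [← Finset.prod_mul_distrib, ← Finset.prod_mul_distrib]
    exact Finset.prod_congr rfl fun s _ => by ring
  calc (∏ s ∈ Finset.range r, (v s - (v r - 1))) * (∏ t ∈ Finset.Ico (r+1) m, ((v r - 1) - v t))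
        * VdmAux m r v * ((∏ s ∈ Finset.range r, (v r - v s)) * ∏ s ∈ Finset.Ico (r+1) m, (v r - v s))
      = ((∏ s ∈ Finset.range r, (v s - (v r 
- 1))) * (∏ s ∈ Finset.range r, (v r - v s)))
        * ((∏ t ∈ Finset.Ico (r+1) m, ((v r - 1) - v t)) * (∏ s ∈ Finset.Ico (r+1) m, (v r - v s)))
        * VdmAux m r v := by ring
    _ = ((∏ s ∈ Finset.range r, (v s - v r)) * (∏ s ∈ Finset.range r, (v r - v s - 1)))
        * ((∏ t ∈ Finset.Ico (r+1) m, (v r - v t)) * (∏ s ∈ Finset.Ico (r+1) m, (v r - v s - 1)))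
        * VdmAux m r v := by rw [e1, e2]
    _ = _ := by ring

lemma Vdm_pos (m : ℕ) (v : ℕ → ℚ) (h : ∀ s t, s < t → t < m → v t < v s) : 0 < Vdm m v := by
  apply Finset.prod_pos
  intro t ht
  apply Finset.prod_pos
  intro s hs
  rw [Finset.mem_range] at ht hs
  have := h s t hs ht
  linarith

lemma beta_strict (lam : ℕ → ℕ) (hlam : ∀ ⦃a b : ℕ⦄, a ≤ b → lam b ≤ lam a) (m : ℕ) :
    ∀ s t, s < t → t < m → lam t + (m - 1 - t) < lam s + (m - 1 - s) := by
  intro s t hst htm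
  have := hlam (le_of_lt hst)
  omega

theorem dim_formula : ∀ (n : ℕ) (lam : ℕ → ℕ), isPartition lam → psize lam = n →
    ∀ m, (∀ s, m ≤ s → lam s = 0) →
    (dimY lam : ℚ) * (∏ s ∈ Finset.range m, (Nat.factorial (lam s + (m - 1 - s)) : ℚ))
      = (n.factorial : ℚ) * Vdm m (fun s => ((lam s + (m - 1 - s) : ℕ) : ℚ)) := by
  intro n
  induction n with
  | zero =>
    intro lam hlam hn m hm
    have hz : lam = fun _ => 0 := psize_zero_eq lam hlam hn
    subst hz
    rw [dimY_of_psize_zero _ hlam hn]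
    have hV : Vdm m (fun s => (((fun _ => 0) s + (m - 1 - s) : ℕ) : ℚ))
        = ∏ t ∈ Finset.range m, (Nat.factorial t : ℚ) := by
      rw [Vdm]
      apply Finset.prod_congr rfl
      intro t ht
      rw [Finset.mem_range] at ht
      have h1 : ∀ s ∈ Finset.range t, ((((fun _ => 0) s + (m - 1 - s) : ℕ) : ℚ)
          - (((fun _ => 0) t + (m - 1 - t) : ℕ) : ℚ)) = ((t - s : ℕ) : ℚ) := by
        intro s hs
        rw [Finset.mem_range] at hs
        have e1 : (m - 1 - s) = (m - 1 - t) + (t - s) := by omega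
        simp only []
        rw [e1]
        push_cast [Nat.zero_add]
        ring
      rw [Finset.prod_congr rfl h1, ← Nat.cast_prod]
      congr 1
      have := Finset.prod_range_reflect (fun j => j + 1) t
      calc ∏ s ∈ Finset.range t, (t - s) = ∏ s ∈ Finset.range t, (t - 1 - s + 1) := by
            apply Finset.prod_congr rfl
            intro s hs
            rw [Finset.mem_range] at hs
            omega
        _ = ∏ s ∈ Finset.range t, (s + 1) := Finset.prod_range_reflect (fun j => j + 1) t
        _ = t.factorial := by rw [Finset.prod_range_add_one_eq_factorial]
    rw [hV]
    rw [Nat.factorial_zero]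
    push_cast
    rw [one_mul, one_mul]
    rw [← Nat.cast_prod, ← Nat.cast_prod]
    congr 1
    calc ∏ s ∈ Finset.range m, ((fun _ => 0) s + (m - 1 - s)).factorial
        = ∏ s ∈ Finset.range m, (m - 1 - s).factorial := by
          apply Finset.prod_congr rfl; intro s _; simp
      _ = ∏ s ∈ Finset.range m, s.factorial :=
          Finset.prod_range_reflect (fun j => j.factorial) m
  | succ n ih =>
    intro lam hlam hn m hm
    have hm1 : 1 ≤ m := by
      by_contra hc
      have h0 : ∀ a, (0:ℕ) ≤ a → lam a = 0 := fun a _ => hm a (by omega)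
      rw [psize_eq_sum lam h0] at hn
      simp at hn
    set b : ℕ → ℕ := fun s => lam s + (m - 1 - s) with hb
    set bQ : ℕ → ℚ := fun s => ((b s : ℕ) : ℚ) with hbQ
    have hdec : ∀ s t, s < t → t < m → b t < b s := fun s t hst htm =>
      beta_strict lam hlam.1 m s t hst htm
    have hdecQ : ∀ s t, s < t → t < m → bQ t < bQ s := by
      intro s t hst htm
      have := hdec s t hst htm
      show ((b t : ℕ) : ℚ) < ((b s : ℕ) : ℚ)
      exact_mod_cast this
    have hinj : Set.InjOn bQ (Finset.range m) := by
      intro s hs t ht hst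
      simp only [Finset.coe_range, Set.mem_Iio] at hs ht
      by_contra hne
      rcases lt_or_gt_of_ne hne with h | h
      · exact absurd hst (ne_of_gt (hdecQ s t h ht))
      · exact absurd hst.symm (ne_of_gt (hdecQ t s h hs))
    have hbr := dimY_branch hlam hn hm
    have key_per : ∀ r ∈ Finset.range m,
        ((if lam (r+1) < lam r then dimY (Function.update lam r (lam r - 1)) else 0 : ℕ) : ℚ)
          * (∏ s ∈ Finset.range m, ((lam s + (m - 1 - s)).factorial : ℚ))
        = (n.factorial : ℚ) * Vdm m bQ
          * (bQ r * ∏ s ∈ (Finset.range m).erase r, ((bQ r - bQ s - 1) / (bQ r - bQ s))) := by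
      intro r hr
      rw [Finset.mem_range] at hr
      by_cases hv : lam (r+1) < lam r
      · rw [if_pos hv]
        have hlamr : 1 ≤ lam r := by omega
        have hbr1 : 1 ≤ b r := by
          have e : b r = lam r + (m - 1 - r) := rfl
          omega
        set mu := Function.update lam r (lam r - 1) with hmu
        have hmupart : isPartition mu := rm_partition hlam hv
        have hmusize : psize mu = n := by
          have h := psize_rm hlam hlamr
          rw [← hmu] at h
          omega
        have hmubound : ∀ s, m ≤ s → mu s = 0 := by
          intro s hs
          rw [hmu, Function.update_apply]
          split
          · rename_i h; omega
          · exact hm s hs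
        have ihmu := ih mu hmupart hmusize m hmubound
        have hbetamu : ∀ s, mu s + (m - 1 - s) = Function.update b r (b r - 1) s := by
          intro s
          rw [hmu, Function.update_apply, Function.update_apply]
          by_cases hsr : s = r
          · subst hsr
            rw [if_pos rfl, if_pos rfl]
            have e : b s = lam s + (m - 1 - s) := rfl
            omega
          · rw [if_neg hsr, if_neg hsr]
        have hcastupd : (fun s => (((Function.update b r (b r - 1)) s : ℕ) : ℚ))
            = Function.update bQ r (bQ r - 1) := by
          funext s
          rw [Function.update_apply, Function.update_apply]
          split
          · rename_i h
            subst h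
            rw [Nat.cast_sub hbr1, Nat.cast_one]
          · rfl
        rw [show (fun s => ((mu s + (m - 1 - s) : ℕ) : ℚ))
            = fun s => (((Function.update b r (b r - 1)) s : ℕ) : ℚ) from
            funext fun s => by rw [hbetamu s], hcastupd] at ihmu
        have ihmu2 : (dimY mu : ℚ) * (∏ s ∈ Finset.range m,
            (((Function.update b r (b r - 1)) s).factorial : ℚ))
            = (n.factorial : ℚ) * Vdm m (Function.update bQ r (bQ r - 1)) := by
          rw [← ihmu]
          congr 1
          exact (Finset.prod_congr rfl fun s _ => by rw [hbetamu s]).symm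
        have hrmem : r ∈ Finset.range m := Finset.mem_range.mpr hr
        have hfactsplit : (∏ s ∈ Finset.range m, ((lam s + (m - 1 - s)).factorial : ℚ))
            = bQ r * ∏ s ∈ Finset.range m, (((Function.update b r (b r - 1)) s).factorial : ℚ) := by
          rw [← Finset.mul_prod_erase (Finset.range m)
            (fun s => (((lam s + (m - 1 - s)).factorial : ℕ) : ℚ)) hrmem,
            ← Finset.mul_prod_erase (Finset.range m)
            (fun s => (((Function.update b r (b r - 1)) s).factorial : ℚ)) hrmem]
          have e1 : ∏ s ∈ (Finset.range m).erase r, ((lam s + (m - 1 - s)).factorial : ℚ)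
              = ∏ s ∈ (Finset.range m).erase r,
                (((Function.update b r (b r - 1)) s).factorial : ℚ) := by
            apply Finset.prod_congr rfl
            intro s hs
            rw [Function.update_of_ne (Finset.ne_of_mem_erase hs), hb]
          rw [e1, Function.update_self]
          have e2 : ((lam r + (m - 1 - r)).factorial : ℚ) = bQ r * ((b r - 1).factorial : ℚ) := by
            have h1 : b r * (b r - 1).factorial = (b r).factorial := Nat.mul_factorial_pred (by omega)
            have h2 : lam r + (m - 1 - r) = b r := rfl
            rw [h2, ← h1]
            push_cast
            rfl
          rw [e2]
          ring
        have hPne : ∀ s ∈ (Finset.range m).erase r, bQ r - bQ s ≠ 0 := by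
          intro s hs
          have hsr := Finset.ne_of_mem_erase hs
          have hsm := Finset.mem_range.mp (Finset.mem_of_mem_erase hs)
          rcases lt_or_gt_of_ne hsr with h | h
          · exact sub_ne_zero_of_ne (ne_of_lt (hdecQ s r h hr))
          · exact sub_ne_zero_of_ne (ne_of_gt (hdecQ r s h hsm))
        have hratio : (∏ s ∈ (Finset.range m).erase r, ((bQ r - bQ s - 1) / (bQ r - bQ s)))
            * (∏ s ∈ (Finset.range m).erase r, (bQ r - bQ s))
            = ∏ s ∈ (Finset.range m).erase r, (bQ r - bQ s - 1) := by
          rw [← Finset.prod_mul_distrib]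
          apply Finset.prod_congr rfl
          intro s hs
          rw [div_mul_cancel₀ _ (hPne s hs)]
        have hPprodne : (∏ s ∈ (Finset.range m).erase r, (bQ r - bQ s)) ≠ 0 :=
          Finset.prod_ne_zero_iff.mpr hPne
        have hVupd : Vdm m (Function.update bQ r (bQ r - 1))
            = Vdm m bQ * ∏ s ∈ (Finset.range m).erase r, ((bQ r - bQ s - 1) / (bQ r - bQ s)) := by
          apply mul_right_cancel₀ hPprodne
          rw [vand_move m r hr bQ, mul_assoc, hratio]
        rw [hfactsplit]
        calc (dimY mu : ℚ) * (bQ r * ∏ s ∈ Finset.range m,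
              (((Function.update b r (b r - 1)) s).factorial : ℚ))
            = bQ r * ((dimY mu : ℚ) * ∏ s ∈ Finset.range m,
              (((Function.update b r (b r - 1)) s).factorial : ℚ)) := by ring
          _ = bQ r * ((n.factorial : ℚ) * Vdm m (Function.update bQ r (bQ r - 1))) := by
              rw [ihmu2]
          _ = _ := by rw [hVupd]; ring
      · rw [if_neg hv]
        push_cast
        rw [zero_mul]
        symm
        rcases lt_or_ge (r+1) m with hrm | hrm
        · have hle : lam (r+1) ≤ lam r := hlam.1 (by omega)
          have heq : lam r = lam (r+1) := by omega
          have hfac : bQ r - bQ (r+1) - 1 = 0 := by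
            have e1 : b (r+1) = lam (r+1) + (m - 1 - (r+1)) := rfl
            have e2 : b r = lam r + (m - 1 - r) := rfl
            have h3 : b (r+1) + 1 = b r := by omega
            have hc : (b (r+1) : ℚ) + 1 = (b r : ℚ) := by exact_mod_cast congrArg (Nat.cast : ℕ → ℚ) h3
            show (b r : ℚ) - (b (r+1) : ℚ) - 1 = 0
            linarith
          have hmem : r + 1 ∈ (Finset.range m).erase r :=
            Finset.mem_erase.mpr ⟨by omega, Finset.mem_range.mpr hrm⟩
          rw [Finset.prod_eq_zero hmem (by rw [hfac, zero_div])]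
          ring
        · have hlam0 : lam r = 0 := by
            have h1 : lam (r+1) = 0 := hm (r+1) (by omega)
            have h2 : lam (r+1) ≤ lam r := hlam.1 (by omega)
            omega
          have : bQ r = 0 := by
            show ((b r : ℕ) : ℚ) = 0
            have e : b r = lam r + (m - 1 - r) := rfl
            norm_cast
            omega
          rw [this]
          ring
    rw [hbr, Nat.cast_sum, Finset.sum_mul, Finset.sum_congr rfl key_per, ← Finset.mul_sum,
      key_identity (Finset.range m) bQ hinj]
    have hsumb : ∑ t ∈ Finset.range m, bQ t = ((n+1 : ℕ) : ℚ) + ((m.choose 2 : ℕ) : ℚ) := by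
      have h1 : ∑ s ∈ Finset.range m, lam s = n + 1 := by
        rw [← psize_eq_sum lam hm, hn]
      have h2 : ∑ s ∈ Finset.range m, (m - 1 - s) = m.choose 2 := by
        have h3 := Finset.sum_range_reflect (fun j => j) m
        have h4 : ∀ s ∈ Finset.range m, m - 1 - s = (fun j => j) (m - 1 - s) := fun _ _ => rfl
        have h5 : ∑ s ∈ Finset.range m, (m - 1 - s) = ∑ s ∈ Finset.range m, s := h3
        rw [h5]
        have h6 := Finset.sum_range_id_mul_two m
        have h7 := Nat.choose_two_right m
        omega
      have : ∑ t ∈ Finset.range m, b t = (n + 1) + m.choose 2 := by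
        have e : ∑ t ∈ Finset.range m, b t = ∑ t ∈ Finset.range m, (lam t + (m - 1 - t)) := rfl
        rw [e, Finset.sum_add_distrib, h1, h2]
      calc ∑ t ∈ Finset.range m, bQ t = ((∑ t ∈ Finset.range m, b t : ℕ) : ℚ) := by
            rw [Nat.cast_sum]
        _ = _ := by rw [this]; push_cast; ring
    rw [Finset.card_range, hsumb]
    rw [show ((n+1 : ℕ) : ℚ) + ((m.choose 2 : ℕ) : ℚ) - ((m.choose 2 : ℕ) : ℚ) = ((n+1:ℕ) : ℚ)
      from by ring]
    rw [Nat.factorial_succ]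
    push_cast
    ring

lemma dimY_pos (lam : ℕ → ℕ) (hlam : isPartition lam) : 0 < dimY lam := by
  obtain ⟨N, hN⟩ := hlam.2
  have hf := dim_formula (psize lam) lam hlam rfl N hN
  have hV : 0 < Vdm N (fun s => ((lam s + (N-1-s) : ℕ) : ℚ)) := by
    apply Vdm_pos
    intro s t hst htm
    have := beta_strict lam hlam.1 N s t hst htm
    exact_mod_cast this
  have hFpos : 0 < ∏ s ∈ Finset.range N, ((lam s + (N - 1 - s)).factorial : ℚ) := by
    apply Finset.prod_pos
    intro s _
    exact_mod_cast Nat.factorial_pos _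
  rcases Nat.eq_zero_or_pos (dimY lam) with h | h
  · exfalso
    rw [h] at hf
    rw [Nat.cast_zero, zero_mul] at hf
    have hpos : 0 < ((psize lam).factorial : ℚ) * Vdm N (fun s => ((lam s + (N-1-s) : ℕ) : ℚ)) :=
      mul_pos (by exact_mod_cast Nat.factorial_pos _) hV
    rw [← hf] at hpos
    exact lt_irrefl 0 hpos
  · exact h

lemma formula_pair (n m r : ℕ) (lam : ℕ → ℕ) (hlam : isPartition lam)
    (hn : psize lam = n + 1) (hm : ∀ s, m ≤ s → lam s = 0) (hv : lam (r+1) < lam r) :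
    ((dimY lam : ℚ) * ∏ s ∈ Finset.range m, ((lam s + (m-1-s)).factorial : ℚ)
        = ((n+1).factorial : ℚ) * Vdm m (fun s => ((lam s + (m - 1 - s) : ℕ) : ℚ)))
    ∧ ((dimY (Function.update lam r (lam r - 1)) : ℚ)
        * ∏ s ∈ Finset.range m, (((Function.update lam r (lam r - 1)) s + (m-1-s)).factorial : ℚ)
        = (n.factorial : ℚ) * (Vdm m (fun s => ((lam s + (m - 1 - s) : ℕ) : ℚ))
          * ∏ s ∈ (Finset.range m).erase r,
            ((((lam r + (m - 1 - r) : ℕ) : ℚ) - ((lam s + (m - 1 - s) : ℕ) : ℚ) - 1)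
              / (((lam r + (m - 1 - r) : ℕ) : ℚ) - ((lam s + (m - 1 - s) : ℕ) : ℚ)))))
    ∧ (∏ s ∈ Finset.range m, ((lam s + (m-1-s)).factorial : ℚ)
        = ((lam r + (m - 1 - r) : ℕ) : ℚ)
          * ∏ s ∈ Finset.range m, (((Function.update lam r (lam r - 1)) s + (m-1-s)).factorial : ℚ)) := by
  have hlamr : 1 ≤ lam r := by omega
  have hrm : r < m := by
    by_contra hc
    have := hm r (by omega)
    omega
  set b : ℕ → ℕ := fun s => lam s + (m - 1 - s) with hb
  set bQ : ℕ → ℚ := fun s => ((b s : ℕ) : ℚ) with hbQ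
  have hbr1 : 1 ≤ b r := by
    have e : b r = lam r + (m - 1 - r) := rfl
    omega
  have hdec : ∀ s t, s < t → t < m → b t < b s := fun s t hst htm =>
    beta_strict lam hlam.1 m s t hst htm
  have hdecQ : ∀ s t, s < t → t < m → bQ t < bQ s := by
    intro s t hst htm
    have := hdec s t hst htm
    show ((b t : ℕ) : ℚ) < ((b s : ℕ) : ℚ)
    exact_mod_cast this
  set mu := Function.update lam r (lam r - 1) with hmu
  have hmupart : isPartition mu := rm_partition hlam hv
  have hmusize : psize mu = n := by
    have h := psize_rm hlam hlamr
    rw [← hmu] at h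
    omega
  have hmubound : ∀ s, m ≤ s → mu s = 0 := by
    intro s hs
    rw [hmu, Function.update_apply]
    split
    · rename_i h; omega
    · exact hm s hs
  have hbetamu : ∀ s, mu s + (m - 1 - s) = Function.update b r (b r - 1) s := by
    intro s
    rw [hmu, Function.update_apply, Function.update_apply]
    by_cases hsr : s = r
    · subst hsr
      rw [if_pos rfl, if_pos rfl]
      have e : b s = lam s + (m - 1 - s) := rfl
      omega
    · rw [if_neg hsr, if_neg hsr]
  have hcastupd : (fun s => (((Function.update b r (b r - 1)) s : ℕ) : ℚ))
      = Function.update bQ r (bQ r - 1) := by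
    funext s
    rw [Function.update_apply, Function.update_apply]
    split
    · rename_i h
      subst h
      rw [Nat.cast_sub hbr1, Nat.cast_one]
    · rfl
  have ihmu := dim_formula n mu hmupart hmusize m hmubound
  rw [show (fun s => ((mu s + (m - 1 - s) : ℕ) : ℚ))
      = fun s => (((Function.update b r (b r - 1)) s : ℕ) : ℚ) from
      funext fun s => by rw [hbetamu s], hcastupd] at ihmu
  have ihmu2 : (dimY mu : ℚ) * (∏ s ∈ Finset.range m,
      ((mu s + (m - 1 - s)).factorial : ℚ))
      = (n.factorial : ℚ) * Vdm m (Function.update bQ r (bQ r - 1)) := by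
    rw [← ihmu]
  have hPne : ∀ s ∈ (Finset.range m).erase r, bQ r - bQ s ≠ 0 := by
    intro s hs
    have hsr := Finset.ne_of_mem_erase hs
    have hsm := Finset.mem_range.mp (Finset.mem_of_mem_erase hs)
    rcases lt_or_gt_of_ne hsr with h | h
    · exact sub_ne_zero_of_ne (ne_of_lt (hdecQ s r h hrm))
    · exact sub_ne_zero_of_ne (ne_of_gt (hdecQ r s h hsm))
  have hratio : (∏ s ∈ (Finset.range m).erase r, ((bQ r - bQ s - 1) / (bQ r - bQ s)))
      * (∏ s ∈ (Finset.range m).erase r, (bQ r - bQ s))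
      = ∏ s ∈ (Finset.range m).erase r, (bQ r - bQ s - 1) := by
    rw [← Finset.prod_mul_distrib]
    exact Finset.prod_congr rfl fun s hs => div_mul_cancel₀ _ (hPne s hs)
  have hPprodne : (∏ s ∈ (Finset.range m).erase r, (bQ r - bQ s)) ≠ 0 :=
    Finset.prod_ne_zero_iff.mpr hPne
  have hVupd : Vdm m (Function.update bQ r (bQ r - 1))
      = Vdm m bQ * ∏ s ∈ (Finset.range m).erase r, ((bQ r - bQ s - 1) / (bQ r - bQ s)) := by
    apply mul_right_cancel₀ hPprodne
    rw [vand_move m r hrm bQ, mul_assoc, hratio]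
  refine ⟨dim_formula (n+1) lam hlam hn m hm, ?_, ?_⟩
  · rw [ihmu2, hVupd]
  · have hrmem : r ∈ Finset.range m := Finset.mem_range.mpr hrm
    rw [← Finset.mul_prod_erase (Finset.range m)
      (fun s => (((lam s + (m - 1 - s)).factorial : ℕ) : ℚ)) hrmem,
      ← Finset.mul_prod_erase (Finset.range m)
      (fun s => ((mu s + (m - 1 - s)).factorial : ℚ)) hrmem]
    have e1 : ∏ s ∈ (Finset.range m).erase r, ((lam s + (m - 1 - s)).factorial : ℚ)
        = ∏ s ∈ (Finset.range m).erase r, ((mu s + (m - 1 - s)).factorial : ℚ) := by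
      apply Finset.prod_congr rfl
      intro s hs
      rw [hmu, Function.update_of_ne (Finset.ne_of_mem_erase hs)]
    have e2 : mu r + (m - 1 - r) = (lam r + (m - 1 - r)) - 1 := by
      rw [hmu, Function.update_self]
      omega
    have e3 : ((lam r + (m - 1 - r)).factorial : ℚ)
        = ((lam r + (m - 1 - r) : ℕ) : ℚ) * ((mu r + (m - 1 - r)).factorial : ℚ) := by
      rw [e2]
      have h1 : (lam r + (m - 1 - r)) * ((lam r + (m - 1 - r)) - 1).factorial
          = (lam r + (m - 1 - r)).factorial := Nat.mul_factorial_pred (by omega)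
      rw [← h1]
      push_cast
      ring
    rw [e1, e3]
    ring

lemma ratio_compare (m r i hi : ℕ) (c ch : ℕ → ℕ)
    (hrm : r < m) (him : i < m) (hhim : hi < m) (hir : i ≠ r) (hhir : hi ≠ r) (hihilt : i < hi)
    (hchr : ch r = c r) (hchi : ch i + 1 = c i) (hchhi : ch hi = c hi + 1)
    (hE : ∀ s, s ≠ i → s ≠ hi → ch s = c s)
    (hdc : ∀ s t, s < t → t < m → c t < c s)
    (hdch : ∀ s t, s < t → t < m → ch t < ch s)
    (hdc' : ∀ s, r < s → s < m → c s + 1 < c r)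
    (hdch' : ∀ s, r < s → s < m → ch s + 1 < ch r) :
    (r < i → ∏ s ∈ (Finset.range m).erase r, (((c r : ℚ) - c s - 1)/((c r : ℚ) - c s))
        ≤ ∏ s ∈ (Finset.range m).erase r, (((ch r : ℚ) - ch s - 1)/((ch r : ℚ) - ch s)))
    ∧ (hi < r → ∏ s ∈ (Finset.range m).erase r, (((ch r : ℚ) - ch s - 1)/((ch r : ℚ) - ch s))
        ≤ ∏ s ∈ (Finset.range m).erase r, (((c r : ℚ) - c s - 1)/((c r : ℚ) - c s))) := by
  have factor_pos : ∀ (d : ℕ → ℕ), (∀ s t, s < t → t < m → d t < d s) →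
      (∀ s, r < s → s < m → d s + 1 < d r) →
      ∀ s ∈ (Finset.range m).erase r, 0 < ((d r : ℚ) - d s - 1)/((d r : ℚ) - d s) := by
    intro d hd hd' s hs
    have hsr := Finset.ne_of_mem_erase hs
    have hsm := Finset.mem_range.mp (Finset.mem_of_mem_erase hs)
    rcases lt_or_gt_of_ne hsr with h | h
    · have h1 : d r < d s := hd s r h hrm
      have h2 : (d r : ℚ) < (d s : ℚ) := by exact_mod_cast h1
      apply div_pos_iff.mpr
      right
      constructor <;> linarith
    · have h1 : d s + 1 < d r := hd' s h hsm
      have h2 : (d s : ℚ) + 1 < (d r : ℚ) := by exact_mod_cast h1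
      apply div_pos_iff.mpr
      left
      constructor <;> linarith
  have hmi : i ∈ (Finset.range m).erase r :=
    Finset.mem_erase.mpr ⟨hir, Finset.mem_range.mpr him⟩
  have hmhi : hi ∈ ((Finset.range m).erase r).erase i :=
    Finset.mem_erase.mpr ⟨by omega, Finset.mem_erase.mpr ⟨hhir, Finset.mem_range.mpr hhim⟩⟩
  set E := (((Finset.range m).erase r).erase i).erase hi with hEdef
  have hEsub : ∀ s ∈ E, s ∈ (Finset.range m).erase r := by
    intro s hs
    exact Finset.mem_of_mem_erase (Finset.mem_of_mem_erase hs)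
  have hEne : ∀ s ∈ E, s ≠ i ∧ s ≠ hi := by
    intro s hs
    exact ⟨Finset.ne_of_mem_erase (Finset.mem_of_mem_erase hs), Finset.ne_of_mem_erase hs⟩
  have split_c : ∏ s ∈ (Finset.range m).erase r, (((c r : ℚ) - c s - 1)/((c r : ℚ) - c s))
      = (((c r : ℚ) - c i - 1)/((c r : ℚ) - c i)) * ((((c r : ℚ) - c hi - 1)/((c r : ℚ) - c hi))
        * ∏ s ∈ E, (((c r : ℚ) - c s - 1)/((c r : ℚ) - c s))) := by
    rw [← Finset.mul_prod_erase _ _ hmi, ← Finset.mul_prod_erase _ _ hmhi]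
  have split_ch : ∏ s ∈ (Finset.range m).erase r, (((ch r : ℚ) - ch s - 1)/((ch r : ℚ) - ch s))
      = (((ch r : ℚ) - ch i - 1)/((ch r : ℚ) - ch i)) * ((((ch r : ℚ) - ch hi - 1)/((ch r : ℚ) - ch hi))
        * ∏ s ∈ E, (((ch r : ℚ) - ch s - 1)/((ch r : ℚ) - ch s))) := by
    rw [← Finset.mul_prod_erase _ _ hmi, ← Finset.mul_prod_erase _ _ hmhi]
  have hEeq : ∏ s ∈ E, (((ch r : ℚ) - ch s - 1)/((ch r : ℚ) - ch s))
      = ∏ s ∈ E, (((c r : ℚ) - c s - 1)/((c r : ℚ) - c s)) := by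
    apply Finset.prod_congr rfl
    intro s hs
    rw [hchr, hE s (hEne s hs).1 (hEne s hs).2]
  have hQpos : 0 < ∏ s ∈ E, (((c r : ℚ) - c s - 1)/((c r : ℚ) - c s)) :=
    Finset.prod_pos (fun s hs => factor_pos c hdc hdc' s (hEsub s hs))
  have echr : ((ch r : ℕ) : ℚ) = ((c r : ℕ) : ℚ) := by exact_mod_cast congrArg (Nat.cast (R := ℚ)) hchr
  have echi : ((ch i : ℕ) : ℚ) = ((c i : ℕ) : ℚ) - 1 := by
    have : ((ch i : ℕ) : ℚ) + 1 = ((c i : ℕ) : ℚ) := by exact_mod_cast congrArg (Nat.cast (R := ℚ)) hchi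
    linarith
  have echhi : ((ch hi : ℕ) : ℚ) = ((c hi : ℕ) : ℚ) + 1 := by
    exact_mod_cast congrArg (Nat.cast (R := ℚ)) hchhi
  have hyx : ((c hi : ℕ) : ℚ) + 1 ≤ ((c i : ℕ) : ℚ) := by
    have := hdc i hi hihilt hhim
    exact_mod_cast this
  constructor
  · intro hri
    have hx2 : ((c i : ℕ) : ℚ) + 2 ≤ ((c r : ℕ) : ℚ) := by
      have := hdc' i hri him
      exact_mod_cast this
    have key : (((c r : ℚ) - c i - 1)/((c r : ℚ) - c i)) * (((c r : ℚ) - c hi - 1)/((c r : ℚ) - c hi))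
        ≤ (((ch r : ℚ) - ch i - 1)/((ch r : ℚ) - ch i)) * (((ch r : ℚ) - ch hi - 1)/((ch r : ℚ) - ch hi)) := by
      have d1 : (0:ℚ) < ((c r : ℕ) : ℚ) - ((c i : ℕ) : ℚ) := by linarith
      have d2 : (0:ℚ) < ((c r : ℕ) : ℚ) - ((c hi : ℕ) : ℚ) := by linarith
      have d3 : (0:ℚ) < ((c r : ℕ) : ℚ) - (((c i : ℕ) : ℚ) - 1) := by linarith
      have d4 : (0:ℚ) < ((c r : ℕ) : ℚ) - (((c hi : ℕ) : ℚ) + 1) := by linarith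
      rw [echr, echi, echhi, div_mul_div_comm, div_mul_div_comm]
      rw [div_le_div_iff₀ (mul_pos d1 d2) (mul_pos d3 d4)]
      nlinarith [mul_nonneg (show (0:ℚ) ≤ ((c i : ℕ) : ℚ) - c hi - 1 by linarith)
        (show (0:ℚ) ≤ 2 * ((c r : ℕ) : ℚ) - c i - c hi - 1 by linarith)]
    rw [split_c, split_ch, hEeq, ← mul_assoc, ← mul_assoc]
    exact mul_le_mul_of_nonneg_right key hQpos.le
  · intro hri
    have hx2 : ((c r : ℕ) : ℚ) + 2 ≤ ((c i : ℕ) : ℚ) := by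
      have h1 := hdch i r (by omega) hrm
      have h2 : ch r + 2 ≤ ch i + 1 := by omega
      have : c r + 2 ≤ c i := by omega
      exact_mod_cast this
    have hy1 : ((c r : ℕ) : ℚ) + 1 ≤ ((c hi : ℕ) : ℚ) := by
      have := hdc hi r hri hrm
      exact_mod_cast this
    have key : (((ch r : ℚ) - ch i - 1)/((ch r : ℚ) - ch i)) * (((ch r : ℚ) - ch hi - 1)/((ch r : ℚ) - ch hi))
        ≤ (((c r : ℚ) - c i - 1)/((c r : ℚ) - c i)) * (((c r : ℚ) - c hi - 1)/((c r : ℚ) - c hi)) := by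
      have d1 : ((c r : ℕ) : ℚ) - (((c i : ℕ) : ℚ) - 1) < 0 := by linarith
      have d2 : ((c r : ℕ) : ℚ) - (((c hi : ℕ) : ℚ) + 1) < 0 := by linarith
      have d3 : ((c r : ℕ) : ℚ) - ((c i : ℕ) : ℚ) < 0 := by linarith
      have d4 : ((c r : ℕ) : ℚ) - ((c hi : ℕ) : ℚ) < 0 := by linarith
      rw [echr, echi, echhi, div_mul_div_comm, div_mul_div_comm]
      rw [div_le_div_iff₀ (mul_pos_of_neg_of_neg d1 d2) (mul_pos_of_neg_of_neg d3 d4)]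
      nlinarith [mul_nonneg (show (0:ℚ) ≤ ((c i : ℕ) : ℚ) - c hi - 1 by linarith)
        (show (0:ℚ) ≤ c i + ((c hi : ℕ) : ℚ) + 1 - 2 * ((c r : ℕ) : ℚ) by linarith)]
    rw [split_c, split_ch, hEeq, ← mul_assoc, ← mul_assoc]
    exact mul_le_mul_of_nonneg_right key hQpos.le

lemma final_compare (dmu dlam dhmu dhlam : ℕ) (n1 n2 A Ah R Rh F' Fh' br : ℚ)
    (hA : 0 < A) (hAh : 0 < Ah) (hF' : 0 < F') (hFh' : 0 < Fh') (hbr : 0 < br)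
    (hn1 : 0 < n1) (hn2 : 0 < n2)
    (hdlam : 0 < dlam) (hdhlam : 0 < dhlam)
    (f1 : (dlam : ℚ) * (br * F') = n2 * A) (f2 : (dhlam : ℚ) * (br * Fh') = n2 * Ah)
    (f3 : (dmu : ℚ) * F' = n1 * (A * R)) (f4 : (dhmu : ℚ) * Fh' = n1 * (Ah * Rh))
    (hR : R ≤ Rh) :
    (dmu : ℝ) / (dlam : ℝ) ≤ (dhmu : ℝ) / (dhlam : ℝ) := by
  have e1 : ((dmu:ℚ) * dhlam) * (F' * (br * Fh')) = (n1 * n2 * A * Ah) * R := by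
    calc ((dmu:ℚ) * dhlam) * (F' * (br * Fh'))
        = ((dmu:ℚ) * F') * ((dhlam:ℚ) * (br * Fh')) := by ring
      _ = (n1 * (A * R)) * (n2 * Ah) := by rw [f3, f2]
      _ = (n1 * n2 * A * Ah) * R := by ring
  have e2 : ((dhmu:ℚ) * dlam) * (F' * (br * Fh')) = (n1 * n2 * A * Ah) * Rh := by
    calc ((dhmu:ℚ) * dlam) * (F' * (br * Fh'))
        = ((dhmu:ℚ) * Fh') * ((dlam:ℚ) * (br * F')) := by ring
      _ = (n1 * (Ah * Rh)) * (n2 * A) := by rw [f4, f1]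
      _ = (n1 * n2 * A * Ah) * Rh := by ring
  have hC : (0:ℚ) < F' * (br * Fh') := by positivity
  have h3 : (n1 * n2 * A * Ah) * R ≤ (n1 * n2 * A * Ah) * Rh :=
    mul_le_mul_of_nonneg_left hR (by positivity)
  have hmul : (dmu:ℚ) * dhlam ≤ (dhmu:ℚ) * dlam := by
    apply le_of_mul_le_mul_right _ hC
    rw [e1, e2]
    exact h3
  have hnat : dmu * dhlam ≤ dhmu * dlam := by exact_mod_cast hmul
  rw [div_le_div_iff₀ (by exact_mod_cast hdlam) (by exact_mod_cast hdhlam)]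
  exact_mod_cast hnat

def dominates (lam mu : ℕ → ℕ) : Prop :=
  ∀ k, ∑ a ∈ Finset.range k, mu a ≤ ∑ a ∈ Finset.range k, lam a

def moveBox (lam hatlam : ℕ → ℕ) (i hi : ℕ) : Prop :=
  lam i = hatlam i + 1 ∧ hatlam hi = lam hi + 1 ∧
  ∀ a, a ≠ i → a ≠ hi → lam a = hatlam a

noncomputable def schurOnes (N : ℕ) (lam : ℕ → ℕ) : ℕ :=
  Set.ncard { T : ℕ → ℕ → ℕ |
    (∀ i j, j < lam i → 1 ≤ T i j ∧ T i j ≤ N) ∧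
    (∀ i j, j + 1 < lam i → T i j ≤ T i (j + 1)) ∧
    (∀ i j, j < lam (i + 1) → T i j < T (i + 1) j) ∧
    (∀ i j, lam i ≤ j → T i j = 0) }

noncomputable def projStep (rho : (ℕ → ℕ) → ℝ) : (ℕ → ℕ) → ℝ :=
  fun mu => ∑ᶠ l ∈ { l : ℕ → ℕ | addBox mu l }, ((dimY mu : ℝ) / (dimY l : ℝ)) * rho l

def isMeasureOn (m : ℕ) (rho : (ℕ → ℕ) → ℝ) : Prop :=
  (∀ f, 0 ≤ rho f) ∧ ∀ f, rho f ≠ 0 → isPartition f ∧ psize f = m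

def stochDom (m : ℕ) (rho rho' : (ℕ → ℕ) → ℝ) : Prop :=
  ∀ U : Set (ℕ → ℕ),
    (∀ a ∈ U, ∀ b, isPartition b → psize b = m → dominates b a → b ∈ U) →
    ∑ᶠ f ∈ U, rho' f ≤ ∑ᶠ f ∈ U, rho f

theorem dim_ratio_monotonicity (n i hi r : ℕ)
    (lam hatlam mu hatmu : ℕ → ℕ)
    (hlam : isPartition lam) (hhatlam : isPartition hatlam)
    (hmu : isPartition mu) (hhatmu : isPartition hatmu)
    (hslam : psize lam = n) (hshatlam : psize hatlam = n)
    (hsmu : psize mu = n - 1) (hshatmu : psize hatmu = n - 1)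
    (hmove : moveBox lam hatlam i hi) (hmovemu : moveBox mu hatmu i hi)
    (hihi : i < hi)
    (hadd : lam = Function.update mu r (mu r + 1))
    (haddhat : hatlam = Function.update hatmu r (hatmu r + 1)) :
    (r < i → (dimY mu : ℝ) / (dimY lam : ℝ) ≤ (dimY hatmu : ℝ) / (dimY hatlam : ℝ)) ∧
    (hi < r → (dimY hatmu : ℝ) / (dimY hatlam : ℝ) ≤ (dimY mu : ℝ) / (dimY lam : ℝ)) := by
  obtain ⟨hmv1, hmv2, hmv3⟩ := hmove
  obtain ⟨hmvmu1, hmvmu2, hmvmu3⟩ := hmovemu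
  have hlamr : lam r = mu r + 1 := by rw [hadd, Function.update_self]
  have hlama : ∀ a, a ≠ r → lam a = mu a := fun a ha => by rw [hadd, Function.update_of_ne ha]
  have hhatlamr : hatlam r = hatmu r + 1 := by rw [haddhat, Function.update_self]
  have hhatlama : ∀ a, a ≠ r → hatlam a = hatmu a := fun a ha => by
    rw [haddhat, Function.update_of_ne ha]
  obtain ⟨N2, hN2⟩ := hmu.2
  have hpl : psize lam = psize mu + 1 := by rw [hadd]; exact psize_update_succ mu r hN2
  obtain ⟨k, rfl⟩ : ∃ k, n = k + 1 := ⟨n - 1, by omega⟩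
  have hsmu' : psize mu = k := by omega
  have hshatmu' : psize hatmu = k := by omega
  obtain ⟨Na, hNa⟩ := hlam.2
  obtain ⟨Nb, hNb⟩ := hhatlam.2
  set m := Na + Nb with hmdef
  have hmlam : ∀ s, m ≤ s → lam s = 0 := fun s hs => hNa s (by omega)
  have hmhat : ∀ s, m ≤ s → hatlam s = 0 := fun s hs => hNb s (by omega)
  have hrm : r < m := by
    by_contra hc
    have := hmlam r (by omega)
    omega
  have him : i < m := by
    by_contra hc
    have := hmlam i (by omega)
    omega
  have hhim : hi < m := by
    by_contra hc
    have := hmhat hi (by omega)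
    omega
  have hmueq : mu = Function.update lam r (lam r - 1) := by
    funext a
    rw [Function.update_apply]
    split
    · rename_i h; subst h; omega
    · rename_i h; exact (hlama a h).symm
  have hhatmueq : hatmu = Function.update hatlam r (hatlam r - 1) := by
    funext a
    rw [Function.update_apply]
    split
    · rename_i h; subst h; omega
    · rename_i h; exact (hhatlama a h).symm
  have hvlam : lam (r+1) < lam r := by
    have h1 := hmu.1 (show r ≤ r+1 by omega)
    have h2 := hlama (r+1) (by omega)
    omega
  have hvhat : hatlam (r+1) < hatlam r := by
    have h1 := hhatmu.1 (show r ≤ r+1 by omega)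
    have h2 := hhatlama (r+1) (by omega)
    omega
  have FP := formula_pair k m r lam hlam (by omega) hmlam hvlam
  have FPh := formula_pair k m r hatlam hhatlam (by omega) hmhat hvhat
  rw [← hmueq] at FP
  rw [← hhatmueq] at FPh
  have hdl := dimY_pos lam hlam
  have hdhl := dimY_pos hatlam hhatlam
  have hA : 0 < Vdm m (fun s => ((lam s + (m - 1 - s) : ℕ) : ℚ)) := by
    apply Vdm_pos
    intro s t hst htm
    have := beta_strict lam hlam.1 m s t hst htm
    exact_mod_cast this
  have hAh : 0 < Vdm m (fun s => ((hatlam s + (m - 1 - s) : ℕ) : ℚ)) := by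
    apply Vdm_pos
    intro s t hst htm
    have := beta_strict hatlam hhatlam.1 m s t hst htm
    exact_mod_cast this
  have hF' : 0 < ∏ s ∈ Finset.range m, ((mu s + (m-1-s)).factorial : ℚ) := by
    apply Finset.prod_pos
    intro s _
    exact_mod_cast Nat.factorial_pos _
  have hFh' : 0 < ∏ s ∈ Finset.range m, ((hatmu s + (m-1-s)).factorial : ℚ) := by
    apply Finset.prod_pos
    intro s _
    exact_mod_cast Nat.factorial_pos _
  have hbrpos : (0:ℚ) < ((lam r + (m - 1 - r) : ℕ) : ℚ) := by
    have : 0 < lam r + (m - 1 - r) := by omega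
    exact_mod_cast this
  have hkfac : (0:ℚ) < (k.factorial : ℚ) := by exact_mod_cast Nat.factorial_pos _
  have hk1fac : (0:ℚ) < ((k+1).factorial : ℚ) := by exact_mod_cast Nat.factorial_pos _
  -- beta strictness transfer for removed-box versions
  have hdcmu : ∀ s, r < s → s < m → (lam s + (m - 1 - s)) + 1 < (lam r + (m - 1 - r)) := by
    intro s hrs hsm
    have h1 := beta_strict mu hmu.1 m r s hrs hsm
    have h2 := hlama s (by omega)
    omega
  have hdchatmu : ∀ s, r < s → s < m → (hatlam s + (m - 1 - s)) + 1 < (hatlam r + (m - 1 - r)) := by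
    intro s hrs hsm
    have h1 := beta_strict hatmu hhatmu.1 m r s hrs hsm
    have h2 := hhatlama s (by omega)
    omega
  constructor
  · intro hri
    have hir : i ≠ r := by omega
    have hhir : hi ≠ r := by omega
    have RC := ratio_compare m r i hi (fun s => lam s + (m - 1 - s))
      (fun s => hatlam s + (m - 1 - s)) hrm him hhim hir hhir hihi
      (by show hatlam r + (m - 1 - r) = lam r + (m - 1 - r)
          have := hmv3 r (by omega) (by omega); omega)
      (by show hatlam i + (m - 1 - i) + 1 = lam i + (m - 1 - i)
          have := hmv1; omega)
      (by show hatlam hi + (m - 1 - hi) = lam hi + (m - 1 - hi) + 1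
          have := hmv2; omega)
      (fun s hsi hshi => by
          show hatlam s + (m - 1 - s) = lam s + (m - 1 - s)
          have := hmv3 s hsi hshi; omega)
      (fun s t hst htm => beta_strict lam hlam.1 m s t hst htm)
      (fun s t hst htm => beta_strict hatlam hhatlam.1 m s t hst htm)
      (fun s hrs hsm => hdcmu s hrs hsm)
      (fun s hrs hsm => hdchatmu s hrs hsm)
    have hbreq : ((hatlam r + (m - 1 - r) : ℕ) : ℚ) = ((lam r + (m - 1 - r) : ℕ) : ℚ) := by
      have := hmv3 r (by omega) (by omega)
      exact_mod_cast congrArg (Nat.cast (R := ℚ)) (by omega : hatlam r + (m-1-r) = lam r + (m-1-r))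
    rw [hbreq] at FPh
    have hRC := RC.1 hri
    beta_reduce at hRC
    rw [hbreq] at hRC
    refine final_compare (dimY mu) (dimY lam) (dimY hatmu) (dimY hatlam)
      (k.factorial : ℚ) ((k+1).factorial : ℚ) _ _ _ _ _ _ _
      hA hAh hF' hFh' hbrpos hkfac hk1fac hdl hdhl ?_ ?_ FP.2.1 FPh.2.1 hRC
    · rw [← FP.2.2]; exact FP.1
    · rw [← FPh.2.2]; exact FPh.1
  · intro hri
    have hir : i ≠ r := by omega
    have hhir : hi ≠ r := by omega
    have RC := ratio_compare m r i hi (fun s => lam s + (m - 1 - s))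
      (fun s => hatlam s + (m - 1 - s)) hrm him hhim hir hhir hihi
      (by show hatlam r + (m - 1 - r) = lam r + (m - 1 - r)
          have := hmv3 r (by omega) (by omega); omega)
      (by show hatlam i + (m - 1 - i) + 1 = lam i + (m - 1 - i)
          have := hmv1; omega)
      (by show hatlam hi + (m - 1 - hi) = lam hi + (m - 1 - hi) + 1
          have := hmv2; omega)
      (fun s hsi hshi => by
          show hatlam s + (m - 1 - s) = lam s + (m - 1 - s)
          have := hmv3 s hsi hshi; omega)
      (fun s t hst htm => beta_strict lam hlam.1 m s t hst htm)
      (fun s t hst htm => beta_strict hatlam hhatlam.1 m s t hst htm)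
      (fun s hrs hsm => hdcmu s hrs hsm)
      (fun s hrs hsm => hdchatmu s hrs hsm)
    have hbreq : ((hatlam r + (m - 1 - r) : ℕ) : ℚ) = ((lam r + (m - 1 - r) : ℕ) : ℚ) := by
      have := hmv3 r (by omega) (by omega)
      exact_mod_cast congrArg (Nat.cast (R := ℚ)) (by omega : hatlam r + (m-1-r) = lam r + (m-1-r))
    rw [hbreq] at FPh
    have hRC := RC.2 hri
    beta_reduce at hRC
    rw [hbreq] at hRC
    refine final_compare (dimY hatmu) (dimY hatlam) (dimY mu) (dimY lam)
      (k.factorial : ℚ) ((k+1).factorial : ℚ) _ _ _ _ _ _ _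
      hAh hA hFh' hF' hbrpos hkfac hk1fac hdhl hdl ?_ ?_ FPh.2.1 FP.2.1 hRC
    · rw [← FPh.2.2]; exact FPh.1
    · rw [← FP.2.2]; exact FP.1
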